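/- (Converse direction in item (3) of the normal form theorem.) Let M be a d×d dilation matrix, a ∈ (l₀(ℤ^d))^{r×r} with r ≥ 2, φ a vector of compactly supported distributions with \widehat{φ}(M^Tξ) = \widehat{a}(ξ)\widehat{φ}(ξ), \widehat{φ}(0) ≠ 0, and suppose a has order m sum rules with matching filter υ with \widehat{υ}(0)\widehat{φ}(0) = 1. Suppose there exists a strongly invertible r×r trigonometric polynomial matrix \widehat{U} with n ≥ m such that \widehat{U}(ξ)\widehat{φ}(ξ) = (1,0,…,0)^T + O(‖ξ‖^n), \widehat{υ}(ξ)\widehat{U}(ξ)^{−1} = (1,0,…,0) + O(‖ξ‖^m), and \overline{\widehat{U}(ξ)}^{−T}\widehat{U}(ξ)^{−1} = diag(‖\widehat{φ}(ξ)‖², ‖\widehat{u₂}(ξ)‖², …, ‖\widehat{u_r}(ξ)‖²) + O(‖ξ‖^{max(m,n)}) as ξ → 0, where \widehat{u_j} is the j-th column of \widehat{U}^{−1}. Then \widehat{υ}(ξ) = ‖\widehat{φ}(ξ)‖^{−2} \overline{\widehat{φ}(ξ)}^T + O(‖ξ‖^m) as ξ → 0. -/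

import Mathlib

open scoped BigOperators Classical
open Complex Matrix

noncomputable section

abbrev Zd (d : ℕ) := Fin d → ℤ
abbrev Rd (d : ℕ) := Fin d → ℝ

/-- real dot product `k·ξ` of an integer vector with a real vector -/
def dotZR {d : ℕ} (k : Zd d) (ξ : Rd d) : ℝ := ∑ j, (k j : ℝ) * ξ j

/-- complex dot product of an integer vector with a complex vector -/
def dotZC {d : ℕ} (k : Zd d) (ξ : Fin d → ℂ) : ℂ := ∑ j, (k j : ℂ) * ξ j

/-- the symbol (Fourier series) `û(ξ) = Σ_k u(k) e^{-ik·ξ}` of a finitely supported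
matrix-valued filter -/
def symbol {d r s : ℕ} (u : Zd d →₀ Matrix (Fin r) (Fin s) ℂ) (ξ : Rd d) :
    Matrix (Fin r) (Fin s) ℂ :=
  u.sum fun k A => Complex.exp (-(Complex.I * (dotZR k ξ : ℂ))) • A

/-- the symbol evaluated at a complex frequency `ξ ∈ ℂ^d` -/
def symbolC {d r s : ℕ} (u : Zd d →₀ Matrix (Fin r) (Fin s) ℂ) (ξ : Fin d → ℂ) :
    Matrix (Fin r) (Fin s) ℂ :=
  u.sum fun k A => Complex.exp (-(Complex.I * dotZC k ξ)) • A

/-- symbol of a scalar filter -/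
def symbolS {d : ℕ} (u : Zd d →₀ ℂ) (ξ : Rd d) : ℂ :=
  u.sum fun k c => Complex.exp (-(Complex.I * (dotZR k ξ : ℂ))) * c

/-- a filter is strongly invertible if the inverse of its symbol is again a matrix of
`2πℤ^d`-periodic trigonometric polynomials -/
def StronglyInvertible {d r : ℕ} (u : Zd d →₀ Matrix (Fin r) (Fin r) ℂ) : Prop :=
  ∃ v : Zd d →₀ Matrix (Fin r) (Fin r) ℂ,
    ∀ ξ : Rd d, symbol u ξ * symbol v ξ = 1 ∧ symbol v ξ * symbol u ξ = 1

/-- convolution `[v * u](n) = Σ_k v(k) u(n-k)` of an arbitrary (row-vector valued)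
sequence with a finitely supported matrix filter -/
def convSeq {d r s : ℕ} (v : Zd d → Matrix (Fin 1) (Fin r) ℂ)
    (u : Zd d →₀ Matrix (Fin r) (Fin s) ℂ) : Zd d → Matrix (Fin 1) (Fin s) ℂ :=
  fun n => u.sum fun k A => v (n - k) * A

/-- `f(ξ) = O(‖ξ‖^m)` as `ξ → 0`: all partial derivatives of total order `< m`
vanish at the origin -/
def vanishesTo {d : ℕ} (m : ℕ) (f : Rd d → ℂ) : Prop :=
  ∀ j, j < m → iteratedFDeriv ℝ j f 0 = 0

/-- `M^T ξ` for an integer matrix `M` and a real vector `ξ` -/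
def mulVecT {d : ℕ} (M : Matrix (Fin d) (Fin d) ℤ) (ξ : Rd d) : Rd d :=
  fun i => ∑ j, (M j i : ℝ) * ξ j

/-- `M k` for an integer matrix `M` and an integer vector `k` -/
def mulVecZ {d : ℕ} (M : Matrix (Fin d) (Fin d) ℤ) (k : Zd d) : Zd d :=
  fun i => ∑ j, M i j * k j

/-- `Ω_M := (M^{-T} ℤ^d) ∩ [0,1)^d` -/
def OmegaSet {d : ℕ} (M : Matrix (Fin d) (Fin d) ℤ) : Set (Rd d) :=
  {ω | (∀ i, ∃ z : ℤ, mulVecT M ω i = (z : ℝ)) ∧ ∀ i, 0 ≤ ω i ∧ ω i < 1}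

/-- a dilation matrix: an integer matrix all of whose (complex) eigenvalues
are greater than one in modulus -/
def IsDilation {d : ℕ} (M : Matrix (Fin d) (Fin d) ℤ) : Prop :=
  ∀ μ ∈ spectrum ℂ (M.map fun z => (z : ℂ)), 1 < ‖μ‖

/-- `a` has order `m` sum rules with respect to `M` with matching filter `vgu` -/
def HasSumRules {d r : ℕ} (M : Matrix (Fin d) (Fin d) ℤ) (m : ℕ)
    (a : Zd d →₀ Matrix (Fin r) (Fin r) ℂ)
    (vgu : Zd d →₀ Matrix (Fin 1) (Fin r) ℂ) : Prop :=
  symbol vgu 0 ≠ 0 ∧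
  ∀ ω ∈ OmegaSet M, ∀ i : Fin r,
    vanishesTo m (fun ξ =>
      (symbol vgu (mulVecT M ξ) * symbol a (ξ + (2 * Real.pi) • ω)) 0 i -
      (if ω = (0 : Rd d) then 1 else 0) * (symbol vgu ξ) 0 i)

/-- the symbol of the `γ`-coset sequence `u^{[γ;M]}(k) = u(γ + Mk)` -/
def cosetSymbol {d r s : ℕ} (M : Matrix (Fin d) (Fin d) ℤ)
    (u : Zd d → Matrix (Fin r) (Fin s) ℂ) (γ : Zd d) (ξ : Rd d) :
    Matrix (Fin r) (Fin s) ℂ :=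
  ∑ᶠ p : Zd d, Complex.exp (-(Complex.I * (dotZR p ξ : ℂ))) • u (γ + mulVecZ M p)

/-- scalar version of the coset symbol -/
def cosetSymbolF {d : ℕ} (N : Matrix (Fin d) (Fin d) ℤ) (u : Zd d → ℂ) (γ : Zd d)
    (ξ : Rd d) : ℂ :=
  ∑ᶠ p : Zd d, Complex.exp (-(Complex.I * (dotZR p ξ : ℂ))) * u (γ + mulVecZ N p)

/-- subdivision operator `S_{u,M} w = |det M|^{1/2} (w↑M) * u` -/
def sdOp {d p q : ℕ} (M : Matrix (Fin d) (Fin d) ℤ) (u : Zd d →₀ Matrix (Fin p) (Fin q) ℂ)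
    (w : Zd d → Matrix (Fin 1) (Fin p) ℂ) : Zd d → Matrix (Fin 1) (Fin q) ℂ :=
  fun n => (Real.sqrt (M.det.natAbs) : ℂ) • ∑ᶠ k : Zd d, w k * u (n - mulVecZ M k)

/-- transition operator `T_{u,M} v = |det M|^{1/2} (v * u^*)(M·)` -/
def tzOp {d p q : ℕ} (M : Matrix (Fin d) (Fin d) ℤ) (u : Zd d →₀ Matrix (Fin p) (Fin q) ℂ)
    (v : Zd d → Matrix (Fin 1) (Fin q) ℂ) : Zd d → Matrix (Fin 1) (Fin p) ℂ :=
  fun n => (Real.sqrt (M.det.natAbs) : ℂ) • ∑ᶠ k : Zd d, v k * (u (k - mulVecZ M n))ᴴ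

/-- a polynomial sequence of (total) degree at most `m` -/
def IsPolySeq {d : ℕ} (m : ℕ) (p : Zd d → ℂ) : Prop :=
  ∃ P : MvPolynomial (Fin d) ℂ, P.totalDegree ≤ m ∧
    ∀ k : Zd d, p k = MvPolynomial.eval (fun j => (k j : ℂ)) P

/-- a polynomial sequence of (total) degree less than `m` -/
def IsPolySeqLt {d : ℕ} (m : ℕ) (p : Zd d → ℂ) : Prop :=
  ∃ P : MvPolynomial (Fin d) ℂ, P.totalDegree < m ∧
    ∀ k : Zd d, p k = MvPolynomial.eval (fun j => (k j : ℂ)) P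

/-- convolution `p * y` of a (scalar) polynomial sequence with a finitely supported
row-vector filter -/
def polyConv {d r : ℕ} (p : Zd d → ℂ) (y : Zd d →₀ Matrix (Fin 1) (Fin r) ℂ) :
    Zd d → Matrix (Fin 1) (Fin r) ℂ :=
  fun n => y.sum fun j A => p (n - j) • A

/-- the standard vector conversion operator `E_N` associated with `N` and the coset
representatives `s` -/
def ENop {d r : ℕ} (N : Matrix (Fin d) (Fin d) ℤ) (s : Fin r → Zd d)
    (v : Zd d → ℂ) : Zd d → Matrix (Fin 1) (Fin r) ℂ :=
  fun k => Matrix.of fun _ j => v (mulVecZ N k + s j)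

/-- the row vector `Υ_N(ξ) = (e^{i N^{-1} s_1 · ξ}, …, e^{i N^{-1} s_r · ξ})` -/
def UpsN {d r : ℕ} (N : Matrix (Fin d) (Fin d) ℤ) (s : Fin r → Zd d) (ξ : Rd d) :
    Matrix (Fin 1) (Fin r) ℂ :=
  Matrix.of fun _ j => Complex.exp (Complex.I *
    ((∑ t, ((N.map fun z => (z : ℝ))⁻¹.mulVec fun i => (s j i : ℝ)) t * ξ t : ℝ) : ℂ))

/-- the sequence `∇^β δ`, whose symbol is `Π_j (1 - e^{-iξ_j})^{β_j}` -/
def nablaDelta {d : ℕ} (β : Fin d → ℕ) : Zd d → ℂ :=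
  fun k => ∏ j, if 0 ≤ k j then ((-1 : ℂ) ^ (k j).toNat * ((β j).choose (k j).toNat : ℂ)) else 0

/-- the matrix `F_{r;M}(ξ) = (e^{-i γ_l · (ξ + 2π ω_k)} I_r)_{l,k}` -/
def FMat {d r n : ℕ} (γ : Fin n → Zd d) (ω : Fin n → Rd d) (ξ : Rd d) :
    Matrix (Fin n × Fin r) (Fin n × Fin r) ℂ :=
  Matrix.of fun li kj =>
    if li.2 = kj.2 then
      Complex.exp (-(Complex.I * (dotZR (γ li.1) (ξ + (2 * Real.pi) • ω kj.1) : ℂ)))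
    else 0

/-- the matrix `D_{u,ω;M}(ξ)` whose `(l,k)`-th `r×r` block is `û(ξ+2πω)` when
`ω_l + ω - ω_k ∈ ℤ^d` and `0` otherwise -/
def DMat {d r n : ℕ} (u : Zd d →₀ Matrix (Fin r) (Fin r) ℂ) (ω : Fin n → Rd d)
    (ωv : Rd d) (ξ : Rd d) : Matrix (Fin n × Fin r) (Fin n × Fin r) ℂ :=
  Matrix.of fun li kj =>
    if ∀ i, ∃ z : ℤ, (ω li.1 + ωv - ω kj.1) i = (z : ℝ) then
      symbol u (ξ + (2 * Real.pi) • ωv) li.2 kj.2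
    else 0

/-- the matrix `E_{u,ω;M}(ξ)` whose `(l,k)`-th block is `û^{[γ_k-γ_l;M]}(ξ) e^{-iγ_k·(2πω)}` -/
def EMat {d r n : ℕ} (M : Matrix (Fin d) (Fin d) ℤ)
    (u : Zd d →₀ Matrix (Fin r) (Fin r) ℂ) (γ : Fin n → Zd d)
    (ωv : Rd d) (ξ : Rd d) : Matrix (Fin n × Fin r) (Fin n × Fin r) ℂ :=
  Matrix.of fun li kj =>
    (Complex.exp (-(Complex.I * (dotZR (γ kj.1) ((2 * Real.pi) • ωv) : ℂ))) •
      cosetSymbol M (fun k => u k) (γ kj.1 - γ li.1) ξ) li.2 kj.2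

/-- the matrix `P_{u;M}(ξ) = [û(ξ+2πω_1), …, û(ξ+2πω_{d_M})]` -/
def PMat {d r sc n : ℕ} (u : Zd d →₀ Matrix (Fin sc) (Fin r) ℂ) (ω : Fin n → Rd d)
    (ξ : Rd d) : Matrix (Fin sc) (Fin n × Fin r) ℂ :=
  Matrix.of fun i kj => symbol u (ξ + (2 * Real.pi) • ω kj.1) i kj.2

/-- the matrix `Q_{u;M}(ξ) = [û^{[γ_1;M]}(ξ), …, û^{[γ_{d_M};M]}(ξ)]` -/
def QMat {d r sc n : ℕ} (M : Matrix (Fin d) (Fin d) ℤ)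
    (u : Zd d →₀ Matrix (Fin sc) (Fin r) ℂ) (γ : Fin n → Zd d)
    (ξ : Rd d) : Matrix (Fin sc) (Fin n × Fin r) ℂ :=
  Matrix.of fun i kj => cosetSymbol M (fun k => u k) (γ kj.1) ξ i kj.2

/-- `j`-fold application of the transition operator with low-pass filter `a`:
the low-pass framelet coefficients `v_j` -/
def tzIter {d r : ℕ} (M : Matrix (Fin d) (Fin d) ℤ)
    (a : Zd d →₀ Matrix (Fin r) (Fin r) ℂ)
    (v0 : Zd d → Matrix (Fin 1) (Fin r) ℂ) : ℕ → Zd d → Matrix (Fin 1) (Fin r) ℂ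
  | 0 => v0
  | j + 1 => tzOp M a (tzIter M a v0 j)

/-- reconstruction: `reconIter … J i = ṽ_{J-i}` for the `J`-level discrete framelet
transform with filter bank `({a;b},{atil;btil})_Θ` applied to input `v0` -/
def reconIter {d r sc : ℕ} (M : Matrix (Fin d) (Fin d) ℤ)
    (a : Zd d →₀ Matrix (Fin r) (Fin r) ℂ) (b : Zd d →₀ Matrix (Fin sc) (Fin r) ℂ)
    (atil : Zd d →₀ Matrix (Fin r) (Fin r) ℂ) (btil : Zd d →₀ Matrix (Fin sc) (Fin r) ℂ)
    (Θ : Zd d →₀ Matrix (Fin r) (Fin r) ℂ)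
    (v0 : Zd d → Matrix (Fin 1) (Fin r) ℂ) (J : ℕ) : ℕ → Zd d → Matrix (Fin 1) (Fin r) ℂ
  | 0 => convSeq (tzIter M a v0 J) Θ
  | i + 1 => fun n =>
      sdOp M atil (reconIter M a b atil btil Θ v0 J i) n +
      sdOp M btil (tzOp M b (tzIter M a v0 (J - i - 1))) n

/-- the `J`-level discrete framelet transform has the perfect reconstruction property:
every input `v0` is exactly and uniquely recovered via the deconvolution `x * Θ = ṽ_0` -/
def PerfectReconstruction {d r sc : ℕ} (M : Matrix (Fin d) (Fin d) ℤ)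
    (a : Zd d →₀ Matrix (Fin r) (Fin r) ℂ) (b : Zd d →₀ Matrix (Fin sc) (Fin r) ℂ)
    (atil : Zd d →₀ Matrix (Fin r) (Fin r) ℂ) (btil : Zd d →₀ Matrix (Fin sc) (Fin r) ℂ)
    (Θ : Zd d →₀ Matrix (Fin r) (Fin r) ℂ) (J : ℕ) : Prop :=
  ∀ v0 : Zd d → Matrix (Fin 1) (Fin r) ℂ,
    convSeq v0 Θ = reconIter M a b atil btil Θ v0 J J ∧
    ∀ x, convSeq x Θ = reconIter M a b atil btil Θ v0 J J → x = v0
/-- `‖φ̂(ξ)‖² = \overline{φ̂(ξ)}^T φ̂(ξ)` -/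
def normSqVec {d r : ℕ} (φhat : Rd d → Matrix (Fin r) (Fin 1) ℂ) (ξ : Rd d) : ℂ :=
  ∑ t, (starRingEnd ℂ) (φhat ξ t 0) * φhat ξ t 0

/-- `‖û_j(ξ)‖²` for the `j`-th column of `Û^{-1}` -/
def normSqCol {d r : ℕ} (Uinv : Zd d →₀ Matrix (Fin r) (Fin r) ℂ) (j : Fin r)
    (ξ : Rd d) : ℂ :=
  ∑ t, (starRingEnd ℂ) (symbol Uinv ξ t j) * symbol Uinv ξ t j



universe u

variable {E : Type u} [NormedAddCommGroup E] [NormedSpace ℝ E]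

/-- all iterated derivatives of order `< m` vanish at `0` -/
def VTo {F : Type u} [NormedAddCommGroup F] [NormedSpace ℝ F] (m : ℕ) (f : E → F) : Prop :=
  ∀ j, j < m → iteratedFDeriv ℝ j f 0 = 0

section basic
variable {F G H : Type u} [NormedAddCommGroup F] [NormedSpace ℝ F]
  [NormedAddCommGroup G] [NormedSpace ℝ G] [NormedAddCommGroup H] [NormedSpace ℝ H]

lemma vt_mono {m m' : ℕ} {f : E → F} (h : VTo m f) (hm : m' ≤ m) : VTo m' f :=
  fun j hj => h j (lt_of_lt_of_le hj hm)

lemma vt_congr {m : ℕ} {f g : E → F} (h : f =ᶠ[nhds (0:E)] g) (hf : VTo m f) : VTo m g := by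
  intro j hj
  rw [← iteratedFDerivWithin_univ,
    (h.symm.filter_mono (nhdsWithin_le_nhds)).iteratedFDerivWithin_eq (h.symm.eq_of_nhds) j,
    iteratedFDerivWithin_univ]
  exact hf j hj

lemma iteratedFDeriv_add_at {j : ℕ} {f g : E → F}
    (hf : ContDiffAt ℝ (⊤:ℕ∞) f 0) (hg : ContDiffAt ℝ (⊤:ℕ∞) g 0) :
    iteratedFDeriv ℝ j (fun x => f x + g x) 0
      = iteratedFDeriv ℝ j f 0 + iteratedFDeriv ℝ j g 0 := by
  obtain ⟨u, hu, hfu⟩ := hf.contDiffOn (m := j) (by exact_mod_cast le_top) (by simp)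
  obtain ⟨v, hv, hgv⟩ := hg.contDiffOn (m := j) (by exact_mod_cast le_top) (by simp)
  have hs : IsOpen (interior (u ∩ v)) := isOpen_interior
  have h0 : (0:E) ∈ interior (u ∩ v) := by
    rw [mem_interior_iff_mem_nhds]; exact Filter.inter_mem hu hv
  rw [← iteratedFDerivWithin_of_isOpen j hs h0, ← iteratedFDerivWithin_of_isOpen j hs h0,
    ← iteratedFDerivWithin_of_isOpen j hs h0]
  exact iteratedFDerivWithin_add_apply'
    ((hfu.mono (interior_subset.trans Set.inter_subset_left)) 0 h0)
    ((hgv.mono (interior_subset.trans Set.inter_subset_right)) 0 h0)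
    (hs.uniqueDiffOn) h0

lemma vt_add {m : ℕ} {f g : E → F}
    (hf : ContDiffAt ℝ (⊤:ℕ∞) f 0) (hg : ContDiffAt ℝ (⊤:ℕ∞) g 0)
    (hvf : VTo m f) (hvg : VTo m g) : VTo m (fun x => f x + g x) := by
  intro j hj
  rw [iteratedFDeriv_add_at hf hg, hvf j hj, hvg j hj, add_zero]

lemma vt_fderiv {m : ℕ} {f : E → F} (h : VTo (m+1) f) : VTo m (fun x => fderiv ℝ f x) := by
  intro j hj
  ext v w
  have := h (j+1) (by omega)
  have h2 := iteratedFDeriv_succ_apply_right (𝕜 := ℝ) (f := f) (x := (0:E))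
    (Fin.snoc v w)
  rw [this] at h2
  simpa [Fin.init_snoc, Fin.snoc_last] using h2.symm

lemma vt_apply_zero {m : ℕ} {f : E → F} (h : VTo (m+1) f) : f 0 = 0 := by
  have := h 0 (Nat.succ_pos m)
  have h2 := iteratedFDeriv_zero_apply (f := f) (x := (0:E)) (𝕜 := ℝ) (m := fun _ => 0)
  rw [this] at h2
  simpa using h2.symm

lemma cda_bilin (B : F →L[ℝ] G →L[ℝ] H) {f : E → F} {g : E → G}
    (hf : ContDiffAt ℝ (⊤:ℕ∞) f 0) (hg : ContDiffAt ℝ (⊤:ℕ∞) g 0) :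
    ContDiffAt ℝ (⊤:ℕ∞) (fun x => B (f x) (g x)) 0 := by
  apply ContDiffAt.clm_apply _ hg
  exact (B.contDiff.contDiffAt).comp 0 hf

end basic

/-- Leibniz-type vanishing: a bilinear map of a vanishing function and a smooth function
vanishes to the same order. -/
lemma vt_bilin : ∀ (m : ℕ) {F G H : Type u}
    [NormedAddCommGroup F] [NormedSpace ℝ F] [NormedAddCommGroup G] [NormedSpace ℝ G]
    [NormedAddCommGroup H] [NormedSpace ℝ H]
    (B : F →L[ℝ] G →L[ℝ] H) (f : E → F) (g : E → G),
    ContDiffAt ℝ (⊤:ℕ∞) f 0 → ContDiffAt ℝ (⊤:ℕ∞) g 0 → VTo m f →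
    VTo m (fun x => B (f x) (g x)) := by
  intro m
  induction m with
  | zero => intro F G H _ _ _ _ _ _ B f g _ _ _ j hj; omega
  | succ m ih =>
    intro F G H _ _ _ _ _ _ B f g hf hg hv
    -- the derivative decomposes via two bilinear maps
    set B₁ : F →L[ℝ] (E →L[ℝ] G) →L[ℝ] (E →L[ℝ] H) :=
      ContinuousLinearMap.precompR E B with hB₁
    set B₂ : (E →L[ℝ] F) →L[ℝ] G →L[ℝ] (E →L[ℝ] H) :=
      ContinuousLinearMap.precompL E B with hB₂
    have hder : (fun x => fderiv ℝ (fun y => B (f y) (g y)) x) =ᶠ[nhds (0:E)]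
        (fun x => B₁ (f x) (fderiv ℝ g x) + B₂ (fderiv ℝ f x) (g x)) := by
      have hfe : ∀ᶠ x in nhds (0:E), DifferentiableAt ℝ f x := by
        have := (hf.of_le (show ((1:ℕ):WithTop ℕ∞) ≤ _ by exact_mod_cast le_top)).eventually
          (by simp)
        exact this.mono fun x hx => hx.differentiableAt (by simp)
      have hge : ∀ᶠ x in nhds (0:E), DifferentiableAt ℝ g x := by
        have := (hg.of_le (show ((1:ℕ):WithTop ℕ∞) ≤ _ by exact_mod_cast le_top)).eventually
          (by simp)
        exact this.mono fun x hx => hx.differentiableAt (by simp)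
      filter_upwards [hfe, hge] with x hfx hgx
      have h1 : HasFDerivAt (fun y => B (f y)) (B.comp (fderiv ℝ f x)) x :=
        (B.hasFDerivAt).comp x hfx.hasFDerivAt
      have h2 := h1.clm_apply hgx.hasFDerivAt
      rw [h2.fderiv]
      ext w
      simp [B₁, B₂]
    intro j hj
    match j with
    | 0 =>
      ext v
      simp [iteratedFDeriv_zero_apply, vt_apply_zero hv]
    | (j+1) =>
      have hj' : j < m := by omega
      have hfd : ContDiffAt ℝ (⊤:ℕ∞) (fun x => fderiv ℝ f x) 0 :=
        hf.fderiv_right (m := (⊤:ℕ∞)) (by exact_mod_cast le_top)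
      have hgd : ContDiffAt ℝ (⊤:ℕ∞) (fun x => fderiv ℝ g x) 0 :=
        hg.fderiv_right (m := (⊤:ℕ∞)) (by exact_mod_cast le_top)
      have hv1 : VTo m (fun x => B₁ (f x) (fderiv ℝ g x)) :=
        ih B₁ f (fun x => fderiv ℝ g x) hf hgd (vt_mono hv (Nat.le_succ m))
      have hv2 : VTo m (fun x => B₂ (fderiv ℝ f x) (g x)) :=
        ih B₂ (fun x => fderiv ℝ f x) g hfd hg (vt_fderiv hv)
      have hsm1 : ContDiffAt ℝ (⊤:ℕ∞) (fun x => B₁ (f x) (fderiv ℝ g x)) 0 :=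
        cda_bilin B₁ hf hgd
      have hsm2 : ContDiffAt ℝ (⊤:ℕ∞) (fun x => B₂ (fderiv ℝ f x) (g x)) 0 :=
        cda_bilin B₂ hfd hg
      have hvsum := vt_add hsm1 hsm2 hv1 hv2
      have hvder : VTo m (fun x => fderiv ℝ (fun y => B (f y) (g y)) x) :=
        vt_congr hder.symm hvsum
      ext v
      rw [iteratedFDeriv_succ_apply_right]
      rw [hvder j hj']
      simp

section corr

variable {E : Type} [NormedAddCommGroup E] [NormedSpace ℝ E]

lemma vt_clm {F G : Type} [NormedAddCommGroup F] [NormedSpace ℝ F]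
    [NormedAddCommGroup G] [NormedSpace ℝ G] (C : F →L[ℝ] G) {m : ℕ} {f : E → F}
    (hf : ContDiffAt ℝ (⊤:ℕ∞) f 0) (hv : VTo m f) : VTo m (fun x => C (f x)) := by
  have h := vt_bilin m
    (((ContinuousLinearMap.lsmul ℝ ℝ : ℝ →L[ℝ] G →L[ℝ] G).flip).comp C) f (fun _ => (1:ℝ))
    hf contDiffAt_const hv
  have he : (fun x => (((ContinuousLinearMap.lsmul ℝ ℝ : ℝ →L[ℝ] G →L[ℝ] G).flip).comp C)
      (f x) (1:ℝ)) = fun x => C (f x) := by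
    funext x; simp
  rwa [he] at h

lemma vt_neg {F : Type} [NormedAddCommGroup F] [NormedSpace ℝ F] {m : ℕ} {f : E → F}
    (hf : ContDiffAt ℝ (⊤:ℕ∞) f 0) (hv : VTo m f) : VTo m (fun x => -(f x)) := by
  have h := vt_clm (-(ContinuousLinearMap.id ℝ F)) hf hv
  simpa using h

lemma vt_mul {m : ℕ} {f g : E → ℂ}
    (hf : ContDiffAt ℝ (⊤:ℕ∞) f 0) (hg : ContDiffAt ℝ (⊤:ℕ∞) g 0)
    (hv : VTo m f) : VTo m (fun x => f x * g x) := by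
  have h := vt_bilin m (ContinuousLinearMap.mul ℝ ℂ) f g hf hg hv
  simpa [ContinuousLinearMap.mul_apply'] using h

lemma vt_mul' {m : ℕ} {f g : E → ℂ}
    (hf : ContDiffAt ℝ (⊤:ℕ∞) f 0) (hg : ContDiffAt ℝ (⊤:ℕ∞) g 0)
    (hv : VTo m f) : VTo m (fun x => g x * f x) := by
  have h := vt_mul hf hg hv
  have he : (fun x => f x * g x) = fun x => g x * f x := by funext x; ring
  rwa [he] at h

lemma vt_conj {m : ℕ} {f : E → ℂ} (hf : ContDiffAt ℝ (⊤:ℕ∞) f 0) (hv : VTo m f) :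
    VTo m (fun x => (starRingEnd ℂ) (f x)) := by
  have h := vt_clm ((Complex.conjCLE : ℂ ≃L[ℝ] ℂ) : ℂ →L[ℝ] ℂ) hf hv
  simpa using h

lemma vt_sub {F : Type} [NormedAddCommGroup F] [NormedSpace ℝ F] {m : ℕ} {f g : E → F}
    (hf : ContDiffAt ℝ (⊤:ℕ∞) f 0) (hg : ContDiffAt ℝ (⊤:ℕ∞) g 0)
    (hvf : VTo m f) (hvg : VTo m g) : VTo m (fun x => f x - g x) := by
  have h := vt_add hf (hg.neg) hvf (vt_neg hg hvg)
  simpa [sub_eq_add_neg] using h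

lemma vt_sum {ι : Type*} {m : ℕ} (s : Finset ι) (f : ι → E → ℂ)
    (hsm : ∀ i ∈ s, ContDiffAt ℝ (⊤:ℕ∞) (f i) 0) (hv : ∀ i ∈ s, VTo m (f i)) :
    VTo m (fun x => ∑ i ∈ s, f i x) := by
  classical
  induction s using Finset.induction_on with
  | empty => intro j hj; simpa using (by
      have : (fun _ : E => (0:ℂ)) = fun _ => (0:ℂ) := rfl
      exact iteratedFDeriv_const_of_ne (by omega) (0:E) ▸ rfl)
  | insert a s' hnot ih =>
    have hsum : (fun x => ∑ i ∈ insert a s', f i x)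
        = fun x => f a x + ∑ i ∈ s', f i x := by
      funext x; rw [Finset.sum_insert hnot]
    rw [hsum]
    exact vt_add (hsm a (Finset.mem_insert_self a s'))
      (ContDiffAt.sum fun i hi => hsm i (Finset.mem_insert_of_mem hi))
      (hv a (Finset.mem_insert_self a s'))
      (ih (fun i hi => hsm i (Finset.mem_insert_of_mem hi))
        (fun i hi => hv i (Finset.mem_insert_of_mem hi)))

end corr

section mainlem

lemma contDiff_symbol {d r s : ℕ} (u : Zd d →₀ Matrix (Fin r) (Fin s) ℂ) (i : Fin r)
    (j : Fin s) : ContDiff ℝ (⊤:ℕ∞) (fun ξ : Rd d => symbol u ξ i j) := by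
  have he : (fun ξ : Rd d => symbol u ξ i j)
      = fun ξ => ∑ k ∈ u.support, Complex.exp (-(Complex.I * (dotZR k ξ : ℂ))) * u k i j := by
    funext ξ
    simp [symbol, Finsupp.sum, Matrix.sum_apply, Matrix.smul_apply, smul_eq_mul]
  rw [he]
  apply ContDiff.sum; intro k _
  apply ContDiff.mul _ contDiff_const
  apply ContDiff.cexp
  apply ContDiff.neg
  apply ContDiff.mul contDiff_const
  have hd : ContDiff ℝ (⊤:ℕ∞) (fun ξ : Rd d => dotZR k ξ) := by
    unfold dotZR
    apply ContDiff.sum; intro t _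
    exact contDiff_const.mul (contDiff_apply ℝ ℝ t)
  exact Complex.ofRealCLM.contDiff.comp hd

end mainlem

/-- converse direction of item (3) of the normal form theorem: if a
strongly invertible `U` realizes the `(m,n)`-normal form with `n ≥ m` together with the
almost-orthogonality condition, then `v̂gu(ξ) = ‖φ̂(ξ)‖^{-2} \overline{φ̂(ξ)}^T + O(‖ξ‖^m)`. -/
theorem stmt18 {d r : ℕ} (hr : 2 ≤ r)
    (M : Matrix (Fin d) (Fin d) ℤ) (hM : IsDilation M)
    (m n : ℕ) (hmn : m ≤ n)
    (a : Zd d →₀ Matrix (Fin r) (Fin r) ℂ)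
    (φhat : Rd d → Matrix (Fin r) (Fin 1) ℂ)
    (hφ : ∀ i, ContDiff ℝ ⊤ fun ξ => φhat ξ i 0)
    (href : ∀ ξ, φhat (mulVecT M ξ) = symbol a ξ * φhat ξ)
    (hφ0 : φhat 0 ≠ 0)
    (vgu : Zd d →₀ Matrix (Fin 1) (Fin r) ℂ)
    (hsr : HasSumRules M m a vgu)
    (hnorm : (symbol vgu 0 * φhat 0) 0 0 = 1)
    (U Uinv : Zd d →₀ Matrix (Fin r) (Fin r) ℂ)
    (hUinv : ∀ ξ : Rd d, symbol U ξ * symbol Uinv ξ = 1 ∧ symbol Uinv ξ * symbol U ξ = 1)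
    (hUφ : ∀ i : Fin r, vanishesTo n (fun ξ =>
      (symbol U ξ * φhat ξ) i 0 - (if (i : ℕ) = 0 then 1 else 0)))
    (hUv : ∀ i : Fin r, vanishesTo m (fun ξ =>
      (symbol vgu ξ * symbol Uinv ξ) 0 i - (if (i : ℕ) = 0 then 1 else 0)))
    (hortho : ∀ i j : Fin r, vanishesTo (max m n) (fun ξ =>
      ((symbol Uinv ξ)ᴴ * symbol Uinv ξ) i j -
        (if i = j then (if (i : ℕ) = 0 then normSqVec φhat ξ else normSqCol Uinv i ξ)
          else 0))) :
    ∀ i : Fin r, vanishesTo m (fun ξ =>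
      symbol vgu ξ 0 i - (normSqVec φhat ξ)⁻¹ * (starRingEnd ℂ) (φhat ξ i 0)) := by
  intro i
  haveI : NeZero r := ⟨by omega⟩
  set N : Rd d → ℂ := fun ξ => normSqVec φhat ξ with hNdef
  have hvz : ∀ x : Fin r, ((x:ℕ) = 0) ↔ (x = (0:Fin r)) :=
    fun x => ⟨fun h => Fin.ext (by simp [h]), fun h => by subst h; simp⟩
  -- basic smoothness facts
  have hφc : ∀ p : Fin r, ContDiffAt ℝ (⊤:ℕ∞) (fun ξ => φhat ξ p 0) 0 :=
    fun p => ((hφ p).of_le le_top).contDiffAt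
  have hsU : ∀ p q : Fin r, ContDiffAt ℝ (⊤:ℕ∞) (fun ξ => symbol U ξ p q) 0 :=
    fun p q => (contDiff_symbol U p q).contDiffAt
  have hsUi : ∀ p q : Fin r, ContDiffAt ℝ (⊤:ℕ∞) (fun ξ => symbol Uinv ξ p q) 0 :=
    fun p q => (contDiff_symbol Uinv p q).contDiffAt
  have hsV : ∀ q : Fin r, ContDiffAt ℝ (⊤:ℕ∞) (fun ξ => symbol vgu ξ 0 q) 0 :=
    fun q => (contDiff_symbol vgu 0 q).contDiffAt
  have cda_conj : ∀ {f : Rd d → ℂ}, ContDiffAt ℝ (⊤:ℕ∞) f 0 →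
      ContDiffAt ℝ (⊤:ℕ∞) (fun ξ => (starRingEnd ℂ) (f ξ)) 0 := by
    intro f hf
    have h := (((Complex.conjCLE : ℂ ≃L[ℝ] ℂ) : ℂ →L[ℝ] ℂ).contDiff.contDiffAt).comp 0 hf
    simpa [Function.comp_def] using h
  have hN : ContDiffAt ℝ (⊤:ℕ∞) N 0 := by
    have : N = fun ξ => ∑ t, (starRingEnd ℂ) (φhat ξ t 0) * φhat ξ t 0 := rfl
    rw [this]
    exact ContDiffAt.sum fun t _ => (cda_conj (hφc t)).mul (hφc t)
  have hexists : ∃ t, φhat 0 t 0 ≠ 0 := by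
    by_contra h
    push_neg at h
    apply hφ0
    ext p q
    have hq : q = 0 := Subsingleton.elim q 0
    rw [hq]
    simpa using h p
  have hN0 : N 0 ≠ 0 := by
    obtain ⟨t, ht⟩ := hexists
    have h1 : N 0 = ∑ s : Fin r, ((Complex.normSq (φhat 0 s 0) : ℝ) : ℂ) :=
      Finset.sum_congr rfl fun s _ => (Complex.normSq_eq_conj_mul_self).symm
    rw [h1]
    push_cast
    rw [← Complex.ofReal_sum]
    simp only [ne_eq, Complex.ofReal_eq_zero]
    have hpos : 0 < ∑ s : Fin r, Complex.normSq (φhat 0 s 0) :=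
      Finset.sum_pos' (fun s _ => Complex.normSq_nonneg _)
        ⟨t, Finset.mem_univ t, Complex.normSq_pos.mpr ht⟩
    exact ne_of_gt hpos
  have hNinv : ContDiffAt ℝ (⊤:ℕ∞) (fun ξ => (N ξ)⁻¹) 0 := hN.inv hN0
  -- smoothness of matrix-product entries
  have cda_Uφ : ∀ k : Fin r, ContDiffAt ℝ (⊤:ℕ∞) (fun ξ => (symbol U ξ * φhat ξ) k 0) 0 := by
    intro k
    have he : (fun ξ => (symbol U ξ * φhat ξ) k 0)
        = fun ξ => ∑ t, symbol U ξ k t * φhat ξ t 0 := by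
      funext ξ; exact Matrix.mul_apply
    rw [he]
    exact ContDiffAt.sum fun t _ => (hsU k t).mul (hφc t)
  have cda_vU : ∀ k : Fin r,
      ContDiffAt ℝ (⊤:ℕ∞) (fun ξ => (symbol vgu ξ * symbol Uinv ξ) 0 k) 0 := by
    intro k
    have he : (fun ξ => (symbol vgu ξ * symbol Uinv ξ) 0 k)
        = fun ξ => ∑ t, symbol vgu ξ 0 t * symbol Uinv ξ t k := by
      funext ξ; exact Matrix.mul_apply
    rw [he]
    exact ContDiffAt.sum fun t _ => (hsV t).mul (hsUi t k)
  have cda_HH : ∀ j : Fin r,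
      ContDiffAt ℝ (⊤:ℕ∞) (fun ξ => ((symbol Uinv ξ)ᴴ * symbol Uinv ξ) 0 j) 0 := by
    intro j
    have he : (fun ξ => ((symbol Uinv ξ)ᴴ * symbol Uinv ξ) 0 j)
        = fun ξ => ∑ t, (starRingEnd ℂ) (symbol Uinv ξ t 0) * symbol Uinv ξ t j := by
      funext ξ
      rw [Matrix.mul_apply]
      exact Finset.sum_congr rfl fun t _ => by rw [Matrix.conjTranspose_apply]; rfl
    rw [he]
    exact ContDiffAt.sum fun t _ => (cda_conj (hsUi t 0)).mul (hsUi t j)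
  -- Step 1 : φ̂ᵢ - (Û⁻¹)ᵢ₀ vanishes to order n
  have hstep1 : ∀ p : Fin r, VTo n (fun ξ => φhat ξ p 0 - symbol Uinv ξ p 0) := by
    intro p
    have he : (fun ξ => φhat ξ p 0 - symbol Uinv ξ p 0)
        = fun ξ => ∑ k : Fin r, symbol Uinv ξ p k *
            ((symbol U ξ * φhat ξ) k 0 - (if (k:ℕ) = 0 then 1 else 0)) := by
      funext ξ
      have h1 : symbol Uinv ξ * (symbol U ξ * φhat ξ) = φhat ξ := by
        rw [← Matrix.mul_assoc, (hUinv ξ).2, Matrix.one_mul]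
      have h2 : ∑ k : Fin r, symbol Uinv ξ p k * (symbol U ξ * φhat ξ) k 0 = φhat ξ p 0 := by
        rw [← Matrix.mul_apply, h1]
      have h3 : ∑ k : Fin r, symbol Uinv ξ p k * (if (k:ℕ) = 0 then (1:ℂ) else 0)
          = symbol Uinv ξ p 0 := by
        simp [hvz, mul_ite, mul_one, mul_zero, Finset.sum_ite_eq']
      simp only [mul_sub, Finset.sum_sub_distrib, h2, h3]
    rw [he]
    exact vt_sum Finset.univ _
      (fun k _ => (hsUi p k).mul ((cda_Uφ k).sub contDiffAt_const))
      (fun k _ => vt_mul' ((cda_Uφ k).sub contDiffAt_const) (hsUi p k) (hUφ k))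
  -- Step 2 : v̂ᵢ - Û₀ᵢ vanishes to order m
  have hstep2 : VTo m (fun ξ => symbol vgu ξ 0 i - symbol U ξ 0 i) := by
    have he : (fun ξ => symbol vgu ξ 0 i - symbol U ξ 0 i)
        = fun ξ => ∑ k : Fin r, ((symbol vgu ξ * symbol Uinv ξ) 0 k -
            (if (k:ℕ) = 0 then 1 else 0)) * symbol U ξ k i := by
      funext ξ
      have h1 : symbol vgu ξ * symbol Uinv ξ * symbol U ξ = symbol vgu ξ := by
        rw [Matrix.mul_assoc, (hUinv ξ).2, Matrix.mul_one]
      have h2 : ∑ k : Fin r, (symbol vgu ξ * symbol Uinv ξ) 0 k * symbol U ξ k i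
          = symbol vgu ξ 0 i := by
        rw [← Matrix.mul_apply, h1]
      have h3 : ∑ k : Fin r, (if (k:ℕ) = 0 then (1:ℂ) else 0) * symbol U ξ k i
          = symbol U ξ 0 i := by
        simp [hvz, ite_mul, one_mul, zero_mul, Finset.sum_ite_eq']
      simp only [sub_mul, Finset.sum_sub_distrib, h2, h3]
    rw [he]
    exact vt_sum Finset.univ _
      (fun k _ => ((cda_vU k).sub contDiffAt_const).mul (hsU k i))
      (fun k _ => vt_mul ((cda_vU k).sub contDiffAt_const) (hsU k i) (hUv k))
  -- simplified form of the orthogonality hypothesis in the first row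
  have hortho0 : ∀ j : Fin r, VTo (max m n)
      (fun ξ => ((symbol Uinv ξ)ᴴ * symbol Uinv ξ) 0 j - (if (0:Fin r) = j then N ξ else 0)) := by
    intro j
    have he : (fun ξ => ((symbol Uinv ξ)ᴴ * symbol Uinv ξ) 0 j -
          (if (0:Fin r) = j then N ξ else 0))
        = fun ξ => ((symbol Uinv ξ)ᴴ * symbol Uinv ξ) 0 j -
            (if (0:Fin r) = j then (if ((0:Fin r):ℕ) = 0 then normSqVec φhat ξ
              else normSqCol Uinv (0:Fin r) ξ) else 0) := by
      funext ξ
      by_cases h : (0:Fin r) = j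
      · subst h; simp [hNdef]
      · simp [h, hNdef]
    rw [he]
    exact hortho 0 j
  -- Step 3 : conj((Û⁻¹)ᵢ₀) - N·Û₀ᵢ vanishes to order max m n
  have hstep3 : VTo (max m n)
      (fun ξ => (starRingEnd ℂ) (symbol Uinv ξ i 0) - N ξ * symbol U ξ 0 i) := by
    have he : (fun ξ => (starRingEnd ℂ) (symbol Uinv ξ i 0) - N ξ * symbol U ξ 0 i)
        = fun ξ => ∑ j : Fin r, (((symbol Uinv ξ)ᴴ * symbol Uinv ξ) 0 j -
            (if (0:Fin r) = j then N ξ else 0)) * symbol U ξ j i := by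
      funext ξ
      have h1 : (symbol Uinv ξ)ᴴ * symbol Uinv ξ * symbol U ξ = (symbol Uinv ξ)ᴴ := by
        rw [Matrix.mul_assoc, (hUinv ξ).2, Matrix.mul_one]
      have h2 : ∑ j : Fin r, ((symbol Uinv ξ)ᴴ * symbol Uinv ξ) 0 j * symbol U ξ j i
          = (starRingEnd ℂ) (symbol Uinv ξ i 0) := by
        rw [← Matrix.mul_apply, h1, Matrix.conjTranspose_apply]; rfl
      have h3 : ∑ j : Fin r, (if (0:Fin r) = j then N ξ else 0) * symbol U ξ j i
          = N ξ * symbol U ξ 0 i := by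
        simp [ite_mul, zero_mul, Finset.sum_ite_eq]
      simp only [sub_mul, Finset.sum_sub_distrib, h2, h3]
    rw [he]
    have cda_ite : ∀ j : Fin r,
        ContDiffAt ℝ (⊤:ℕ∞) (fun ξ => if (0:Fin r) = j then N ξ else 0) 0 := by
      intro j
      by_cases h : (0:Fin r) = j
      · simpa [h] using hN
      · simpa [h] using (contDiffAt_const (c := (0:ℂ)))
    exact vt_sum Finset.univ _
      (fun j _ => ((cda_HH j).sub (cda_ite j)).mul (hsU j i))
      (fun j _ => vt_mul ((cda_HH j).sub (cda_ite j)) (hsU j i) (hortho0 j))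
  -- assemble the three pieces
  have hv2 : VTo m (fun ξ => (N ξ)⁻¹ *
      (N ξ * symbol U ξ 0 i - (starRingEnd ℂ) (symbol Uinv ξ i 0))) := by
    have hv := vt_neg (((cda_conj (hsUi i 0))).sub (hN.mul (hsU 0 i))) hstep3
    have he : (fun ξ => -((starRingEnd ℂ) (symbol Uinv ξ i 0) - N ξ * symbol U ξ 0 i))
        = fun ξ => N ξ * symbol U ξ 0 i - (starRingEnd ℂ) (symbol Uinv ξ i 0) := by
      funext ξ; ring
    rw [he] at hv
    exact vt_mul' ((hN.mul (hsU 0 i)).sub (cda_conj (hsUi i 0))) hNinv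
      (vt_mono hv (le_max_left m n))
  have hv3 : VTo m (fun ξ => (N ξ)⁻¹ *
      ((starRingEnd ℂ) (symbol Uinv ξ i 0) - (starRingEnd ℂ) (φhat ξ i 0))) := by
    have hv := vt_neg ((hφc i).sub (hsUi i 0)) (hstep1 i)
    have hvc := vt_conj ((hsUi i 0).sub (hφc i))
      (by
        have he : (fun ξ => -(φhat ξ i 0 - symbol Uinv ξ i 0))
            = fun ξ => symbol Uinv ξ i 0 - φhat ξ i 0 := by funext ξ; ring
        rw [he] at hv
        exact hv)
    have he2 : (fun ξ => (starRingEnd ℂ) (symbol Uinv ξ i 0 - φhat ξ i 0))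
        = fun ξ => (starRingEnd ℂ) (symbol Uinv ξ i 0) - (starRingEnd ℂ) (φhat ξ i 0) := by
      funext ξ; rw [map_sub]
    rw [he2] at hvc
    exact vt_mul' ((cda_conj (hsUi i 0)).sub (cda_conj (hφc i))) hNinv
      (vt_mono hvc hmn)
  have hsum : VTo m (fun ξ => (symbol vgu ξ 0 i - symbol U ξ 0 i) +
      ((N ξ)⁻¹ * (N ξ * symbol U ξ 0 i - (starRingEnd ℂ) (symbol Uinv ξ i 0)) +
       (N ξ)⁻¹ * ((starRingEnd ℂ) (symbol Uinv ξ i 0) - (starRingEnd ℂ) (φhat ξ i 0)))) := by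
    apply vt_add ((hsV i).sub (hsU 0 i)) _ hstep2
    · apply vt_add
      · exact hNinv.mul ((hN.mul (hsU 0 i)).sub (cda_conj (hsUi i 0)))
      · exact hNinv.mul ((cda_conj (hsUi i 0)).sub (cda_conj (hφc i)))
      · exact hv2
      · exact hv3
    · exact (hNinv.mul ((hN.mul (hsU 0 i)).sub (cda_conj (hsUi i 0)))).add
        (hNinv.mul ((cda_conj (hsUi i 0)).sub (cda_conj (hφc i))))
  -- the assembled function agrees with the target near 0
  have hev : (fun ξ => (symbol vgu ξ 0 i - symbol U ξ 0 i) +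
      ((N ξ)⁻¹ * (N ξ * symbol U ξ 0 i - (starRingEnd ℂ) (symbol Uinv ξ i 0)) +
       (N ξ)⁻¹ * ((starRingEnd ℂ) (symbol Uinv ξ i 0) - (starRingEnd ℂ) (φhat ξ i 0))))
      =ᶠ[nhds (0 : Rd d)]
      (fun ξ => symbol vgu ξ 0 i - (normSqVec φhat ξ)⁻¹ * (starRingEnd ℂ) (φhat ξ i 0)) := by
    have hNc : ContinuousAt N 0 := hN.continuousAt
    have hne : ∀ᶠ ξ in nhds (0 : Rd d), N ξ ≠ 0 := hNc.eventually_ne hN0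
    filter_upwards [hne] with ξ hξ
    have : normSqVec φhat ξ = N ξ := rfl
    rw [this]
    field_simp
    ring
  exact vt_congr hev hsum


end
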